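/- For every idealised conformity measure A: E_{x,τ}[min_y max_{y'≠y} p_A(x,y',τ)] = ∫_0^1 Prob_{x,τ}(|Γ_A^ε(x,τ)| > 1) dε. -/

import Mathlib

noncomputable section Conformal

open Finset

variable {X Y : Type*} [Fintype X] [Fintype Y] [DecidableEq Y]

/-- The p-value `p_A(x,y,τ) = Q{z : A z < A (x,y)} + τ·Q{z : A z = A (x,y)}`. -/
def pValue (Q A : X × Y → ℝ) (x : X) (y : Y) (τ : ℝ) : ℝ :=
  (∑ z : X × Y, if A z < A (x, y) then Q z else 0)
    + τ * ∑ z : X × Y, if A z = A (x, y) then Q z else 0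

/-- The prediction set `Γ_A^ε(x,τ) = {y : p_A(x,y,τ) > ε}`. -/
def predSet (Q A : X × Y → ℝ) (ε : ℝ) (x : X) (τ : ℝ) : Finset Y :=
  Finset.univ.filter fun y => ε < pValue Q A x y τ

/-- The marginal `Q_X` of `Q` on the object space. -/
def margX (Q : X × Y → ℝ) (x : X) : ℝ := ∑ y, Q (x, y)

/-- The marginal `Q_Y` of `Q` on the label space. -/
def margY (Q : X × Y → ℝ) (y : Y) : ℝ := ∑ x, Q (x, y)

/-- The conditional probability `Q(y|x)`; as a function of `z = (x,y)` this is the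
CP idealised conformity measure. -/
def condQ (Q : X × Y → ℝ) (z : X × Y) : ℝ := Q z / margX Q z.1

/-- Expectation `E_{x,τ}` with `x ~ Q_X` and `τ` uniform on `[0,1]`, independent. -/
def expXT (Q : X × Y → ℝ) (g : X → ℝ → ℝ) : ℝ :=
  ∑ x, margX Q x * ∫ τ in (0:ℝ)..1, g x τ

/-- Expectation `E_{(x,y),τ}` with `(x,y) ~ Q` and `τ` uniform on `[0,1]`, independent. -/
def expZT (Q : X × Y → ℝ) (g : X × Y → ℝ → ℝ) : ℝ :=
  ∑ z, Q z * ∫ τ in (0:ℝ)..1, g z τ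

open Classical in
/-- Probability `Prob_{x,τ}` with `x ~ Q_X` and `τ` uniform on `[0,1]`, independent. -/
def probXT (Q : X × Y → ℝ) (P : X → ℝ → Prop) : ℝ :=
  expXT Q fun x τ => if P x τ then 1 else 0

open Classical in
/-- Probability `Prob_{(x,y),τ}` with `(x,y) ~ Q` and `τ` uniform on `[0,1]`, independent. -/
def probZT (Q : X × Y → ℝ) (P : X × Y → ℝ → Prop) : ℝ :=
  expZT Q fun z τ => if P z τ then 1 else 0

/-- `A` is a refinement of `B`. -/
def Refines (A B : X × Y → ℝ) : Prop :=
  ∀ z1 z2 : X × Y, B z1 < B z2 → A z1 < A z2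

/-- `max_{y' ≠ y} p_A(x,y',τ)`. -/
def maxOther (Q A : X × Y → ℝ) (x : X) (y : Y) (τ : ℝ) : ℝ :=
  ⨆ y' : {y' : Y // y' ≠ y}, pValue Q A x y'.1 τ

/-- The unconfidence `min_y max_{y' ≠ y} p_A(x,y',τ)`. -/
def unconf (Q A : X × Y → ℝ) (x : X) (τ : ℝ) : ℝ := ⨅ y : Y, maxOther Q A x y τ

/-- The credibility `max_y p_A(x,y,τ)`. -/
def maxPV (Q A : X × Y → ℝ) (x : X) (τ : ℝ) : ℝ := ⨆ y : Y, pValue Q A x y τ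

/-- The predictability `f(x) = max_y Q(y|x)`. -/
def predictability (Q : X × Y → ℝ) (x : X) : ℝ := ⨆ y : Y, condQ Q (x, y)

/-- `c` is a choice function: `Q(c x | x) = f(x)` for all `x`. -/
def IsChoiceFun (Q : X × Y → ℝ) (c : X → Y) : Prop :=
  ∀ x, condQ Q (x, c x) = predictability Q x

/-- The signed predictability (SP) idealised conformity measure corresponding to `c`. -/
def SPMeasure (Q : X × Y → ℝ) (c : X → Y) : X × Y → ℝ := fun z =>
  if z.2 = c z.1 then predictability Q z.1 else -predictability Q z.1

/-- The modified conditional probability (MCP) idealised conformity measure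
corresponding to `c`. -/
def MCPMeasure (Q : X × Y → ℝ) (c : X → Y) : X × Y → ℝ := fun z =>
  if z.2 = c z.1 then condQ Q z else condQ Q z - 1

/-- The modified signed predictability (MSP) idealised conformity measure
(independent of the choice function: `y = ŷ(x)` iff `Q(y|x) = f(x)` when `f(x) > 1/2`). -/
def MSPMeasure (Q : X × Y → ℝ) : X × Y → ℝ := fun z =>
  if 1 / 2 < predictability Q z.1 then
    if condQ Q z = predictability Q z.1 then predictability Q z.1
    else -predictability Q z.1
  else 0

/-- S-optimality. -/
def SOpt (Q A : X × Y → ℝ) : Prop :=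
  ∀ B : X × Y → ℝ,
    expXT Q (fun x τ => ∑ y, pValue Q A x y τ)
      ≤ expXT Q (fun x τ => ∑ y, pValue Q B x y τ)

/-- N-optimality. -/
def NOpt (Q A : X × Y → ℝ) : Prop :=
  ∀ B : X × Y → ℝ, ∀ ε ∈ Set.Ioo (0:ℝ) 1,
    expXT Q (fun x τ => ((predSet Q A ε x τ).card : ℝ))
      ≤ expXT Q (fun x τ => ((predSet Q B ε x τ).card : ℝ))

/-- OF-optimality. -/
def OFOpt (Q A : X × Y → ℝ) : Prop :=
  ∀ B : X × Y → ℝ,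
    expZT Q (fun z τ => ∑ y' ∈ Finset.univ.erase z.2, pValue Q A z.1 y' τ)
      ≤ expZT Q (fun z τ => ∑ y' ∈ Finset.univ.erase z.2, pValue Q B z.1 y' τ)

/-- OE-optimality. -/
def OEOpt (Q A : X × Y → ℝ) : Prop :=
  ∀ B : X × Y → ℝ, ∀ ε ∈ Set.Ioo (0:ℝ) 1,
    expZT Q (fun z τ => (((predSet Q A ε z.1 τ).erase z.2).card : ℝ))
      ≤ expZT Q (fun z τ => (((predSet Q B ε z.1 τ).erase z.2).card : ℝ))

/-- U-optimality. -/
def UOpt (Q A : X × Y → ℝ) : Prop :=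
  ∀ B : X × Y → ℝ,
    expXT Q (unconf Q A) < expXT Q (unconf Q B) ∨
      (expXT Q (unconf Q A) = expXT Q (unconf Q B) ∧
        expXT Q (maxPV Q A) ≤ expXT Q (maxPV Q B))

/-- M-optimality. -/
def MOpt (Q A : X × Y → ℝ) : Prop :=
  ∀ B : X × Y → ℝ, ∀ ε ∈ Set.Ioo (0:ℝ) 1,
    probXT Q (fun x τ => 1 < (predSet Q A ε x τ).card)
        < probXT Q (fun x τ => 1 < (predSet Q B ε x τ).card) ∨
      (probXT Q (fun x τ => 1 < (predSet Q A ε x τ).card)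
          = probXT Q (fun x τ => 1 < (predSet Q B ε x τ).card) ∧
        probXT Q (fun x τ => (predSet Q B ε x τ).card = 0)
          ≤ probXT Q (fun x τ => (predSet Q A ε x τ).card = 0))

/-- F-optimality. -/
def FOpt (Q A : X × Y → ℝ) : Prop :=
  ∀ B : X × Y → ℝ,
    expXT Q (fun x τ => (∑ y, pValue Q A x y τ) - maxPV Q A x τ)
        < expXT Q (fun x τ => (∑ y, pValue Q B x y τ) - maxPV Q B x τ) ∨
      (expXT Q (fun x τ => (∑ y, pValue Q A x y τ) - maxPV Q A x τ)
          = expXT Q (fun x τ => (∑ y, pValue Q B x y τ) - maxPV Q B x τ) ∧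
        expXT Q (maxPV Q A) ≤ expXT Q (maxPV Q B))

/-- E-optimality. -/
def EOpt (Q A : X × Y → ℝ) : Prop :=
  ∀ B : X × Y → ℝ, ∀ ε ∈ Set.Ioo (0:ℝ) 1,
    expXT Q (fun x τ => max (((predSet Q A ε x τ).card : ℝ) - 1) 0)
        < expXT Q (fun x τ => max (((predSet Q B ε x τ).card : ℝ) - 1) 0) ∨
      (expXT Q (fun x τ => max (((predSet Q A ε x τ).card : ℝ) - 1) 0)
          = expXT Q (fun x τ => max (((predSet Q B ε x τ).card : ℝ) - 1) 0) ∧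
        probXT Q (fun x τ => (predSet Q B ε x τ).card = 0)
          ≤ probXT Q (fun x τ => (predSet Q A ε x τ).card = 0))

/-- OU-optimality. -/
def OUOpt (Q A : X × Y → ℝ) : Prop :=
  ∀ B : X × Y → ℝ,
    expZT Q (fun z τ => maxOther Q A z.1 z.2 τ)
      ≤ expZT Q (fun z τ => maxOther Q B z.1 z.2 τ)

/-- OM-optimality. -/
def OMOpt (Q A : X × Y → ℝ) : Prop :=
  ∀ B : X × Y → ℝ, ∀ ε ∈ Set.Ioo (0:ℝ) 1,
    probZT Q (fun z τ => ((predSet Q A ε z.1 τ).erase z.2).Nonempty)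
      ≤ probZT Q (fun z τ => ((predSet Q B ε z.1 τ).erase z.2).Nonempty)

end Conformal

/-- `E_(x,τ)[min_y max_(y'≠y) p_A(x,y',τ)] = ∫_0^1 Prob(|Γ^ε| > 1) dε`. -/
theorem stmt13 {X Y : Type*} [Fintype X] [Fintype Y] [DecidableEq Y] [Nonempty X]
    (hY : 2 ≤ Fintype.card Y) (Q : X × Y → ℝ) (hQ0 : ∀ z, 0 ≤ Q z)
    (hQ1 : ∑ z : X × Y, Q z = 1) (hQX : ∀ x, 0 < margX Q x) (A : X × Y → ℝ) :
    expXT Q (unconf Q A)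
      = ∫ ε in (0:ℝ)..1, probXT Q (fun x τ => 1 < (predSet Q A ε x τ).card) := by
  classical
  haveI : Nontrivial Y := Fintype.one_lt_card_iff_nontrivial.mp hY
  haveI hne : ∀ y : Y, Nonempty {y' : Y // y' ≠ y} := fun y => by
    obtain ⟨y', h⟩ := exists_ne y; exact ⟨⟨y', h⟩⟩
  -- p-value facts
  have hpv0 : ∀ x y (τ : ℝ), 0 ≤ τ → 0 ≤ pValue Q A x y τ := by
    intro x y τ hτ
    exact add_nonneg (Finset.sum_nonneg fun z _ => by split_ifs <;> simp [hQ0 z])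
      (mul_nonneg hτ (Finset.sum_nonneg fun z _ => by split_ifs <;> simp [hQ0 z]))
  have hpv1 : ∀ x y (τ : ℝ), 0 ≤ τ → τ ≤ 1 → pValue Q A x y τ ≤ 1 := by
    intro x y τ hτ0 hτ1
    have hkey : (∑ z : X × Y, if A z < A (x, y) then Q z else 0)
        + (∑ z : X × Y, if A z = A (x, y) then Q z else 0) ≤ 1 := by
      rw [← Finset.sum_add_distrib, ← hQ1]
      refine Finset.sum_le_sum fun z _ => ?_
      split_ifs with h1 h2 <;> simp_all [hQ0 z] <;> linarith [lt_irrefl (A z)]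
    have hSeq : 0 ≤ ∑ z : X × Y, if A z = A (x, y) then Q z else 0 :=
      Finset.sum_nonneg fun z _ => by split_ifs <;> simp [hQ0 z]
    unfold pValue
    nlinarith
  have hpvm : ∀ x y, Monotone (pValue Q A x y) := by
    intro x y t1 t2 h
    unfold pValue
    have hSeq : 0 ≤ ∑ z : X × Y, if A z = A (x, y) then Q z else 0 :=
      Finset.sum_nonneg fun z _ => by split_ifs <;> simp [hQ0 z]
    nlinarith
  -- structural lemmas about maxOther and unconf
  have hpv_le_mo : ∀ x y (τ : ℝ) (y' : {y' : Y // y' ≠ y}),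
      pValue Q A x y'.1 τ ≤ maxOther Q A x y τ := by
    intro x y τ y'
    unfold maxOther
    exact le_ciSup (Set.Finite.bddAbove
      (Set.finite_range fun y'' : {y'' : Y // y'' ≠ y} => pValue Q A x y''.1 τ)) y'
  have hmo_le : ∀ x y (τ : ℝ) (c : ℝ),
      (∀ y' : {y' : Y // y' ≠ y}, pValue Q A x y'.1 τ ≤ c) → maxOther Q A x y τ ≤ c := by
    intro x y τ c h
    unfold maxOther
    exact ciSup_le h
  have hu_le_mo : ∀ x (τ : ℝ) (y : Y), unconf Q A x τ ≤ maxOther Q A x y τ := by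
    intro x τ y
    unfold unconf
    exact ciInf_le (Set.Finite.bddBelow (Set.finite_range _)) y
  have hle_u : ∀ x (τ : ℝ) (c : ℝ),
      (∀ y : Y, c ≤ maxOther Q A x y τ) → c ≤ unconf Q A x τ := by
    intro x τ c h
    unfold unconf
    exact le_ciInf h
  -- maxOther facts
  have hmo_mono : ∀ x y, Monotone (maxOther Q A x y) := by
    intro x y t1 t2 h
    exact hmo_le x y t1 _ fun y' => le_trans (hpvm x y'.1 h) (hpv_le_mo x y t2 y')
  have hmo0 : ∀ x y (τ : ℝ), 0 ≤ τ → 0 ≤ maxOther Q A x y τ := by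
    intro x y τ hτ
    obtain ⟨y'⟩ := hne y
    exact le_trans (hpv0 x y'.1 τ hτ) (hpv_le_mo x y τ y')
  have hmo1 : ∀ x y (τ : ℝ), 0 ≤ τ → τ ≤ 1 → maxOther Q A x y τ ≤ 1 := by
    intro x y τ hτ0 hτ1
    exact hmo_le x y τ 1 fun y' => hpv1 x y'.1 τ hτ0 hτ1
  -- unconf facts
  have hu_mono : ∀ x, Monotone (unconf Q A x) := by
    intro x t1 t2 h
    exact hle_u x t2 _ fun y => (hu_le_mo x t1 y).trans (hmo_mono x y h)
  have hu0 : ∀ x (τ : ℝ), 0 ≤ τ → 0 ≤ unconf Q A x τ := fun x τ hτ =>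
    hle_u x τ 0 fun y => hmo0 x y τ hτ
  have hu1 : ∀ x (τ : ℝ), 0 ≤ τ → τ ≤ 1 → unconf Q A x τ ≤ 1 := fun x τ hτ0 hτ1 =>
    (hu_le_mo x τ (Classical.arbitrary Y)).trans (hmo1 x (Classical.arbitrary Y) τ hτ0 hτ1)
  -- key characterization : |Γ^ε| > 1 ↔ ε < unconf
  have hiff : ∀ (ε : ℝ) x (τ : ℝ),
      (1 < (predSet Q A ε x τ).card) ↔ ε < unconf Q A x τ := by
    intro ε x τ
    constructor
    · intro h
      obtain ⟨y1, h1, y2, h2, hne12⟩ := Finset.one_lt_card.mp h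
      simp only [predSet, Finset.mem_filter, Finset.mem_univ, true_and] at h1 h2
      have hmin : ε < min (pValue Q A x y1 τ) (pValue Q A x y2 τ) := lt_min h1 h2
      refine lt_of_lt_of_le hmin (hle_u x τ _ fun y => ?_)
      rcases ne_or_eq y1 y with hy | hy
      · exact (min_le_left _ _).trans (hpv_le_mo x y τ ⟨y1, hy⟩)
      · have hy2 : y2 ≠ y := by rw [← hy]; exact hne12.symm
        exact (min_le_right _ _).trans (hpv_le_mo x y τ ⟨y2, hy2⟩)
    · intro h
      have hstep : ∀ y : Y, ∃ y', y' ≠ y ∧ ε < pValue Q A x y' τ := by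
        intro y
        have h1 : ε < maxOther Q A x y τ := lt_of_lt_of_le h (hu_le_mo x τ y)
        unfold maxOther at h1
        obtain ⟨y', hy'⟩ := exists_lt_of_lt_ciSup h1
        exact ⟨y'.1, y'.2, hy'⟩
      obtain ⟨y1, _, hp1⟩ := hstep (Classical.arbitrary Y)
      obtain ⟨y2, hne21, hp2⟩ := hstep y1
      have hm1 : y1 ∈ predSet Q A ε x τ := by
        simp only [predSet, Finset.mem_filter, Finset.mem_univ, true_and]; exact hp1
      have hm2 : y2 ∈ predSet Q A ε x τ := by
        simp only [predSet, Finset.mem_filter, Finset.mem_univ, true_and]; exact hp2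
      exact Finset.one_lt_card.mpr ⟨y1, hm1, y2, hm2, hne21.symm⟩
  -- indicator function
  set F : X → ℝ → ℝ → ℝ := fun x ε τ => if ε < unconf Q A x τ then 1 else 0 with hF
  have hFτmono : ∀ x (ε : ℝ), Monotone (fun τ => F x ε τ) := by
    intro x ε t1 t2 h
    simp only [hF]
    split_ifs with h1 h2
    · exact le_refl 1
    · exact absurd (lt_of_lt_of_le h1 (hu_mono x h)) h2
    · norm_num
    · exact le_refl 0
  have hFint : ∀ x (ε : ℝ), IntervalIntegrable (fun τ => F x ε τ) MeasureTheory.volume 0 1 :=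
    fun x ε => (hFτmono x ε).intervalIntegrable
  set G : X → ℝ → ℝ := fun x ε => ∫ τ in (0:ℝ)..1, F x ε τ with hG
  have hGanti : ∀ x, Antitone (G x) := by
    intro x ε1 ε2 h
    refine intervalIntegral.integral_mono_on zero_le_one (hFint x ε2) (hFint x ε1)
      fun τ _ => ?_
    simp only [hF]
    split_ifs with h1 h2
    · exact le_refl 1
    · exact absurd (lt_of_le_of_lt h h1) h2
    · norm_num
    · exact le_refl 0
  have hGint : ∀ x, IntervalIntegrable (G x) MeasureTheory.volume 0 1 :=
    fun x => (hGanti x).intervalIntegrable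
  -- rewrite probability as sum of integrals of F
  have hprob : ∀ ε : ℝ,
      probXT Q (fun x τ => 1 < (predSet Q A ε x τ).card) = ∑ x, margX Q x * G x ε := by
    intro ε
    simp only [probXT, expXT, hG]
    refine Finset.sum_congr rfl fun x _ => ?_
    congr 1
    refine intervalIntegral.integral_congr fun τ _ => ?_
    simp [hF, hiff ε x τ]
  have hrw : (fun ε => probXT Q (fun x τ => 1 < (predSet Q A ε x τ).card))
      = fun ε => ∑ x, margX Q x * G x ε := funext hprob
  rw [hrw]
  rw [intervalIntegral.integral_finset_sum fun x _ => (hGint x).const_mul (margX Q x)]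
  show expXT Q (unconf Q A) = _
  simp only [expXT]
  refine Finset.sum_congr rfl fun x _ => ?_
  rw [intervalIntegral.integral_const_mul]
  congr 1
  -- core identity for fixed x : ∫ τ, unconf = ∫ ε, G x ε by Fubini
  have hμfin : MeasureTheory.IsFiniteMeasure
      (MeasureTheory.volume.restrict (Set.Ioc (0:ℝ) 1)) := by
    constructor
    rw [MeasureTheory.Measure.restrict_apply_univ, Real.volume_Ioc]
    simp
  have hsm : Measurable (unconf Q A x) := (hu_mono x).measurable
  have hmF : Measurable (Function.uncurry fun ε τ => F x ε τ) := by
    refine Measurable.ite ?_ measurable_const measurable_const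
    exact measurableSet_lt measurable_fst (hsm.comp measurable_snd)
  have hintF : MeasureTheory.Integrable (Function.uncurry fun ε τ => F x ε τ)
      ((MeasureTheory.volume.restrict (Set.Ioc (0:ℝ) 1)).prod
        (MeasureTheory.volume.restrict (Set.Ioc (0:ℝ) 1))) := by
    refine ⟨hmF.aestronglyMeasurable, ?_⟩
    refine MeasureTheory.HasFiniteIntegral.of_bounded (C := 1) ?_
    filter_upwards with p
    simp only [Function.uncurry, hF]
    split_ifs <;> simp
  have hswap := MeasureTheory.integral_integral_swap hintF
  have hinner : ∀ τ ∈ Set.Ioc (0:ℝ) 1,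
      (∫ ε in Set.Ioc (0:ℝ) 1, F x ε τ) = unconf Q A x τ := by
    intro τ hτ
    have h0 := hu0 x τ hτ.1.le
    have h1 := hu1 x τ hτ.1.le hτ.2
    have hind : (fun ε => F x ε τ)
        = Set.indicator (Set.Iio (unconf Q A x τ)) (fun _ => (1:ℝ)) := by
      funext ε
      simp [hF, Set.indicator_apply]
    rw [hind, MeasureTheory.integral_indicator measurableSet_Iio,
      MeasureTheory.setIntegral_const, MeasureTheory.measureReal_restrict_apply measurableSet_Iio]
    have hset : Set.Iio (unconf Q A x τ) ∩ Set.Ioc (0:ℝ) 1 = Set.Ioo 0 (unconf Q A x τ) := by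
      ext ε
      simp only [Set.mem_inter_iff, Set.mem_Iio, Set.mem_Ioc, Set.mem_Ioo]
      constructor
      · rintro ⟨h2, h3, _⟩; exact ⟨h3, h2⟩
      · rintro ⟨h2, h3⟩; exact ⟨h3, h2, le_trans h3.le h1⟩
    rw [hset, Real.volume_real_Ioo]
    simp [ENNReal.toReal_ofReal, h0]
  calc ∫ τ in (0:ℝ)..1, unconf Q A x τ
      = ∫ τ in Set.Ioc (0:ℝ) 1, unconf Q A x τ :=
        intervalIntegral.integral_of_le zero_le_one
    _ = ∫ τ in Set.Ioc (0:ℝ) 1, ∫ ε in Set.Ioc (0:ℝ) 1, F x ε τ :=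
        (MeasureTheory.setIntegral_congr_fun measurableSet_Ioc hinner).symm
    _ = ∫ ε in Set.Ioc (0:ℝ) 1, ∫ τ in Set.Ioc (0:ℝ) 1, F x ε τ := hswap.symm
    _ = ∫ ε in (0:ℝ)..1, G x ε := by
        rw [intervalIntegral.integral_of_le zero_le_one]
        refine MeasureTheory.setIntegral_congr_fun measurableSet_Ioc fun ε _ => ?_
        show (∫ τ in Set.Ioc (0:ℝ) 1, F x ε τ) = ∫ τ in (0:ℝ)..1, F x ε τ
        exact (intervalIntegral.integral_of_le zero_le_one).symm
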